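/- Suppose U = {(u_i, v_j) : 0 ≤ i < p, 0 ≤ j < q} is a 2-dimensional weight-vector set built from two independent nondecreasing positive vectors u = (u_0,...,u_{p−1}) and v = (v_0,...,v_{q−1}). Then a pair (a,b) ∈ ℕ^p × ℕ^q is a 2-dimensional U-parking function if and only if a is a u-parking function and b is a v-parking function. -/
import Mathlib


/-- Number of east steps of the lattice path `P` strictly before step `r`
(`P s = true` means step `s` is an east step). -/
def EBefore (p q : ℕ) (P : Fin (p + q) → Bool) (r : Fin (p + q)) : ℕ :=
  (Finset.univ.filter fun s : Fin (p + q) => s < r ∧ P s = true).card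

/-- Number of north steps of the lattice path `P` strictly before step `r`. -/
def NBefore (p q : ℕ) (P : Fin (p + q) → Bool) (r : Fin (p + q)) : ℕ :=
  (Finset.univ.filter fun s : Fin (p + q) => s < r ∧ P s = false).card

/-- `P` encodes a monotone lattice path from `(0,0)` to `(p,q)`:
exactly `p` of its `p + q` steps are east steps. -/
def IsLatticePath (p q : ℕ) (P : Fin (p + q) → Bool) : Prop :=
  (Finset.univ.filter fun s : Fin (p + q) => P s = true).card = p

/-- `(a, b)` is a 2-dimensional `U`-parking function for the node weights
`u_{i,j}, v_{i,j}`: the order statistics of `a` and `b` are bounded by some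
lattice path from `(0,0)` to `(p,q)`, where an east step from `(x,y)` bounds
the next order statistic of `a` by `u x y` and a north step from `(x,y)`
bounds the next order statistic of `b` by `v x y`. -/
def IsUPF2 (p q : ℕ) (u v : ℕ → ℕ → ℕ) (a : Fin p → ℕ) (b : Fin q → ℕ) : Prop :=
  ∃ σ : Equiv.Perm (Fin p), ∃ τ : Equiv.Perm (Fin q),
    Monotone (a ∘ ⇑σ) ∧ Monotone (b ∘ ⇑τ) ∧
    ∃ P : Fin (p + q) → Bool, IsLatticePath p q P ∧
      ∀ r : Fin (p + q),
        (P r = true → ∀ h : EBefore p q P r < p,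
          a (σ ⟨EBefore p q P r, h⟩) < u (EBefore p q P r) (NBefore p q P r)) ∧
        (P r = false → ∀ h : NBefore p q P r < q,
          b (τ ⟨NBefore p q P r, h⟩) < v (EBefore p q P r) (NBefore p q P r))

/-- `a` is a `u`-parking function. -/
def IsUPF (n : ℕ) (u : Fin n → ℕ) (a : Fin n → ℕ) : Prop :=
  ∃ σ : Equiv.Perm (Fin n), Monotone (a ∘ ⇑σ) ∧ ∀ i : Fin n, a (σ i) < u i

lemma card_filter_lt {n : ℕ} (r : Fin n) :
    (Finset.univ.filter fun s : Fin n => s < r).card = r.val := by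
  have : (Finset.univ.filter fun s : Fin n => s < r) = Finset.Iio r := by
    ext s; simp
  rw [this, Fin.card_Iio]

lemma EBefore_add_NBefore (p q : ℕ) (P : Fin (p + q) → Bool) (r : Fin (p + q)) :
    EBefore p q P r + NBefore p q P r = r.val := by
  classical
  unfold EBefore NBefore
  have key := Finset.card_filter_add_card_filter_not
    (s := Finset.univ.filter fun s : Fin (p+q) => s < r) (p := fun s => P s = true)
  rw [card_filter_lt] at key
  have e1 : ((Finset.univ.filter fun s : Fin (p+q) => s < r).filter fun s => P s = true)
      = Finset.univ.filter fun s : Fin (p+q) => s < r ∧ P s = true := by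
    ext s; simp
  have e2 : ((Finset.univ.filter fun s : Fin (p+q) => s < r).filter fun s => ¬ P s = true)
      = Finset.univ.filter fun s : Fin (p+q) => s < r ∧ P s = false := by
    ext s; simp
  rw [e1, e2] at key
  exact key

lemma EBefore_lt (p q : ℕ) (P : Fin (p + q) → Bool) (hP : IsLatticePath p q P)
    (r : Fin (p + q)) (hr : P r = true) : EBefore p q P r < p := by
  classical
  have hnot : r ∉ (Finset.univ.filter fun s : Fin (p+q) => s < r ∧ P s = true) := by simp
  have hsub : insert r (Finset.univ.filter fun s : Fin (p+q) => s < r ∧ P s = true)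
      ⊆ Finset.univ.filter fun s : Fin (p+q) => P s = true := by
    intro s hs
    simp only [Finset.mem_insert, Finset.mem_filter, Finset.mem_univ, true_and] at hs ⊢
    rcases hs with h | h
    · exact h ▸ hr
    · exact h.2
  have := Finset.card_le_card hsub
  rw [Finset.card_insert_of_notMem hnot, hP] at this
  exact this

lemma NBefore_lt (p q : ℕ) (P : Fin (p + q) → Bool) (hP : IsLatticePath p q P)
    (r : Fin (p + q)) (hr : P r = false) : NBefore p q P r < q := by
  classical
  have hq : (Finset.univ.filter fun s : Fin (p+q) => P s = false).card = q := by
    have := Finset.card_filter_add_card_filter_not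
      (s := (Finset.univ : Finset (Fin (p+q)))) (p := fun s => P s = true)
    simp only [Bool.not_eq_true, Finset.card_univ, Fintype.card_fin] at this
    rw [hP] at this
    omega
  have hnot : r ∉ (Finset.univ.filter fun s : Fin (p+q) => s < r ∧ P s = false) := by simp
  have hsub : insert r (Finset.univ.filter fun s : Fin (p+q) => s < r ∧ P s = false)
      ⊆ Finset.univ.filter fun s : Fin (p+q) => P s = false := by
    intro s hs
    simp only [Finset.mem_insert, Finset.mem_filter, Finset.mem_univ, true_and] at hs ⊢
    rcases hs with h | h
    · exact h ▸ hr
    · exact h.2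
  have := Finset.card_le_card hsub
  rw [Finset.card_insert_of_notMem hnot, hq] at this
  exact this

lemma EBefore_strict (p q : ℕ) (P : Fin (p + q) → Bool) {r r' : Fin (p + q)}
    (h : r < r') (hr : P r = true) : EBefore p q P r < EBefore p q P r' := by
  classical
  have hnot : r ∉ (Finset.univ.filter fun s : Fin (p+q) => s < r ∧ P s = true) := by simp
  have hsub : insert r (Finset.univ.filter fun s : Fin (p+q) => s < r ∧ P s = true)
      ⊆ Finset.univ.filter fun s : Fin (p+q) => s < r' ∧ P s = true := by
    intro s hs
    simp only [Finset.mem_insert, Finset.mem_filter, Finset.mem_univ, true_and] at hs ⊢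
    rcases hs with hh | hh
    · exact ⟨hh ▸ h, hh ▸ hr⟩
    · exact ⟨hh.1.trans h, hh.2⟩
  have := Finset.card_le_card hsub
  rw [Finset.card_insert_of_notMem hnot] at this
  exact this

lemma NBefore_strict (p q : ℕ) (P : Fin (p + q) → Bool) {r r' : Fin (p + q)}
    (h : r < r') (hr : P r = false) : NBefore p q P r < NBefore p q P r' := by
  classical
  have hnot : r ∉ (Finset.univ.filter fun s : Fin (p+q) => s < r ∧ P s = false) := by simp
  have hsub : insert r (Finset.univ.filter fun s : Fin (p+q) => s < r ∧ P s = false)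
      ⊆ Finset.univ.filter fun s : Fin (p+q) => s < r' ∧ P s = false := by
    intro s hs
    simp only [Finset.mem_insert, Finset.mem_filter, Finset.mem_univ, true_and] at hs ⊢
    rcases hs with hh | hh
    · exact ⟨hh ▸ h, hh ▸ hr⟩
    · exact ⟨hh.1.trans h, hh.2⟩
  have := Finset.card_le_card hsub
  rw [Finset.card_insert_of_notMem hnot] at this
  exact this

lemma exists_east (p q : ℕ) (P : Fin (p + q) → Bool) (hP : IsLatticePath p q P)
    (i : ℕ) (hi : i < p) : ∃ r, P r = true ∧ EBefore p q P r = i := by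
  classical
  let f : {r : Fin (p+q) // P r = true} → Fin p :=
    fun r => ⟨EBefore p q P r.1, EBefore_lt p q P hP r.1 r.2⟩
  have hinj : Function.Injective f := by
    intro r s hrs
    have hv : EBefore p q P r.1 = EBefore p q P s.1 := congrArg Fin.val hrs
    rcases lt_trichotomy r.1 s.1 with h | h | h
    · exact absurd hv (Nat.ne_of_lt (EBefore_strict p q P h r.2))
    · exact Subtype.ext h
    · exact absurd hv.symm (Nat.ne_of_lt (EBefore_strict p q P h s.2))
  have hcard : Fintype.card {r : Fin (p+q) // P r = true} = Fintype.card (Fin p) := by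
    rw [Fintype.card_subtype, Fintype.card_fin]; exact hP
  have hsurj : Function.Surjective f :=
    ((Fintype.bijective_iff_injective_and_card f).2 ⟨hinj, hcard⟩).2
  obtain ⟨r, hr⟩ := hsurj ⟨i, hi⟩
  exact ⟨r.1, r.2, congrArg Fin.val hr⟩

lemma exists_north (p q : ℕ) (P : Fin (p + q) → Bool) (hP : IsLatticePath p q P)
    (j : ℕ) (hj : j < q) : ∃ r, P r = false ∧ NBefore p q P r = j := by
  classical
  let f : {r : Fin (p+q) // P r = false} → Fin q :=
    fun r => ⟨NBefore p q P r.1, NBefore_lt p q P hP r.1 r.2⟩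
  have hinj : Function.Injective f := by
    intro r s hrs
    have hv : NBefore p q P r.1 = NBefore p q P s.1 := congrArg Fin.val hrs
    rcases lt_trichotomy r.1 s.1 with h | h | h
    · exact absurd hv (Nat.ne_of_lt (NBefore_strict p q P h r.2))
    · exact Subtype.ext h
    · exact absurd hv.symm (Nat.ne_of_lt (NBefore_strict p q P h s.2))
  have hcard : Fintype.card {r : Fin (p+q) // P r = false} = Fintype.card (Fin q) := by
    rw [Fintype.card_subtype, Fintype.card_fin]
    have := Finset.card_filter_add_card_filter_not
      (s := (Finset.univ : Finset (Fin (p+q)))) (p := fun s => P s = true)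
    simp only [Bool.not_eq_true, Finset.card_univ, Fintype.card_fin] at this
    rw [hP] at this
    omega
  have hsurj : Function.Surjective f :=
    ((Fintype.bijective_iff_injective_and_card f).2 ⟨hinj, hcard⟩).2
  obtain ⟨r, hr⟩ := hsurj ⟨j, hj⟩
  exact ⟨r.1, r.2, congrArg Fin.val hr⟩

/-- When the 2-dimensional node set is built from two independent vectors
(`u_{i,j} = uu i`, `v_{i,j} = vv j`), a pair is a 2-dimensional `U`-parking
function iff each component is a parking function for the respective vector. -/
theorem uPF2_independent_iff (p q : ℕ) (uu vv : ℕ → ℕ)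
    (huu : ∀ i j, i ≤ j → uu i ≤ uu j) (hvv : ∀ i j, i ≤ j → vv i ≤ vv j)
    (huupos : ∀ i, 0 < uu i) (hvvpos : ∀ j, 0 < vv j)
    (a : Fin p → ℕ) (b : Fin q → ℕ) :
    IsUPF2 p q (fun i _ => uu i) (fun _ j => vv j) a b ↔
      IsUPF p (fun i : Fin p => uu (i : ℕ)) a ∧ IsUPF q (fun j : Fin q => vv (j : ℕ)) b := by
  classical
  constructor
  · rintro ⟨σ, τ, hma, hmb, P, hP, hbound⟩
    refine ⟨⟨σ, hma, ?_⟩, ⟨τ, hmb, ?_⟩⟩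
    · intro i
      obtain ⟨r, hrE, hrEq⟩ := exists_east p q P hP i.val i.isLt
      have h := (hbound r).1 hrE
      rw [hrEq] at h
      simpa using h i.isLt
    · intro j
      obtain ⟨r, hrN, hrEq⟩ := exists_north p q P hP j.val j.isLt
      have h := (hbound r).2 hrN
      rw [hrEq] at h
      simpa using h j.isLt
  · rintro ⟨⟨σ, hma, ha⟩, ⟨τ, hmb, hb⟩⟩
    set P : Fin (p + q) → Bool := fun r => decide (r.val < p) with hPdef
    have hcardp : (Finset.univ.filter fun s : Fin (p+q) => P s = true).card = p := by
      have hbij : (Finset.univ.filter fun s : Fin (p+q) => P s = true).card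
          = (Finset.range p).card := by
        apply Finset.card_bij (fun s _ => s.val)
        · intro s hs
          simp only [hPdef, Finset.mem_filter, decide_eq_true_eq] at hs
          simpa using hs.2
        · intro s _ t _ h
          exact Fin.ext h
        · intro m hm
          simp only [Finset.mem_range] at hm
          exact ⟨⟨m, by omega⟩, by simp [hPdef, hm], rfl⟩
      simpa using hbij
    refine ⟨σ, τ, hma, hmb, P, hcardp, fun r => ⟨?_, ?_⟩⟩
    · intro hr h
      have hrp : r.val < p := by simpa [hPdef] using hr
      have hE : EBefore p q P r = r.val := by
        unfold EBefore
        have he : (Finset.univ.filter fun s : Fin (p+q) => s < r ∧ P s = true)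
            = Finset.univ.filter fun s : Fin (p+q) => s < r := by
          ext s
          simp only [Finset.mem_filter, Finset.mem_univ, true_and, hPdef,
            decide_eq_true_eq, Fin.lt_def]
          omega
        rw [he, card_filter_lt]
      simp only [hE]
      exact ha ⟨r.val, hrp⟩
    · intro hr h
      have hrp : ¬ r.val < p := by simpa [hPdef] using hr
      have hE : EBefore p q P r = p := by
        unfold EBefore
        have he : (Finset.univ.filter fun s : Fin (p+q) => s < r ∧ P s = true)
            = Finset.univ.filter fun s : Fin (p+q) => P s = true := by
          ext s
          simp only [Finset.mem_filter, Finset.mem_univ, true_and, hPdef,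
            decide_eq_true_eq, Fin.lt_def]
          omega
        rw [he]
        exact hcardp
      have hsum := EBefore_add_NBefore p q P r
      have hN : NBefore p q P r = r.val - p := by omega
      simp only [hN]
      exact hb ⟨r.val - p, by omega⟩
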